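/- Let r ≥ 3 and n ≥ r + 2. Let H'_r be the r-uniform hypergraph on vertex set {1,...,n} whose edges are all r-element subsets of {1,...,n−1} together with the single additional edge {1,...,r−1, n}. Then H'_r contains no Hamiltonian Berge cycle, and every pair of non-adjacent vertices u, v of H'_r satisfies d_{∂H'_r}(u) + d_{∂H'_r}(v) = n + r − 3. -/

import Mathlib

/-- Two vertices are adjacent in the hypergraph with edge set `H`
if some edge contains both of them. -/
def HAdj {V : Type*} (H : Finset (Finset V)) (u v : V) : Prop :=
  u ≠ v ∧ ∃ e ∈ H, u ∈ e ∧ v ∈ e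

/-- The degree of `u` in the 2-shadow `∂H`: the number of vertices adjacent to `u`. -/
noncomputable def shadowDeg {V : Type*} (H : Finset (Finset V)) (u : V) : ℕ :=
  {v | HAdj H u v}.ncard

/-- A `[3]`-graph: every edge has exactly 2 or 3 vertices. -/
def IsThreeGraph {V : Type*} (H : Finset (Finset V)) : Prop :=
  ∀ e ∈ H, e.card = 2 ∨ e.card = 3

/-- A Berge cycle of length `t` in the hypergraph with edge set `H`:
`t` distinct vertices `vtx i` and `t` distinct edges `edge i` (indices mod `t`)
with `{vtx i, vtx (i+1)} ⊆ edge i` for every `i`. -/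
structure BergeCycle {V : Type*} (H : Finset (Finset V)) (t : ℕ) where
  vtx : ZMod t → V
  edge : ZMod t → Finset V
  vtx_inj : Function.Injective vtx
  edge_inj : Function.Injective edge
  edge_mem : ∀ i, edge i ∈ H
  mem_fst : ∀ i, vtx i ∈ edge i
  mem_snd : ∀ i, vtx (i + 1) ∈ edge i

/-- `d_C(u)`: the number of vertices of the Berge cycle `C` adjacent to `u`. -/
noncomputable def BergeCycle.dC {V : Type*} {H : Finset (Finset V)} {t : ℕ}
    (C : BergeCycle H t) (u : V) : ℕ :=
  {v | v ∈ Set.range C.vtx ∧ HAdj H u v}.ncard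

/-- `H` contains a Hamiltonian Berge cycle, i.e. a Berge cycle whose
vertex set is all of `V`. -/
def HamiltonianBergeCycle {V : Type*} (H : Finset (Finset V)) : Prop :=
  ∃ (t : ℕ) (C : BergeCycle H t), Set.range C.vtx = Set.univ

/-- A set `U` of indices of vertices of the Berge cycle `C` is usable for `u`:
(1) for every `i ∈ U` there is an edge in `E(u, v_{i-1}) - {e_{i-2}}`;
(2) any two distinct `i, j ∈ U` are non-consecutive on `C`;
(3) for every pair of distinct `i, j ∈ U` there are distinct edges
`e ∈ E(u, v_{i-1}) - {e_{i-2}}` and `e' ∈ E(u, v_{j-1}) - {e_{j-2}}`. -/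
def Usable {V : Type*} {H : Finset (Finset V)} {t : ℕ} (C : BergeCycle H t) (u : V)
    (U : Set (ZMod t)) : Prop :=
  (∀ i ∈ U, ∃ e ∈ H, e ≠ C.edge (i - 2) ∧ u ∈ e ∧ C.vtx (i - 1) ∈ e) ∧
  (∀ i ∈ U, ∀ j ∈ U, i ≠ j → j ≠ i + 1 ∧ j ≠ i - 1) ∧
  (∀ i ∈ U, ∀ j ∈ U, i ≠ j → ∃ e ∈ H, ∃ e' ∈ H, e ≠ e' ∧
    e ≠ C.edge (i - 2) ∧ u ∈ e ∧ C.vtx (i - 1) ∈ e ∧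
    e' ≠ C.edge (j - 2) ∧ u ∈ e' ∧ C.vtx (j - 1) ∈ e')

/-- `CwBtw a b c` : on the cycle oriented clockwise, `b` lies strictly between
`a` and `c` on the clockwise arc from `a` to `c`. -/
def CwBtw {t : ℕ} (a b c : ZMod t) : Prop :=
  0 < (b - a).val ∧ (b - a).val < (c - a).val

/-- `e` is an `(i,j;k)`-bridge of the Berge cycle `C`. -/
def IsBridge {V : Type*} [DecidableEq V] {H : Finset (Finset V)} {t : ℕ}
    (C : BergeCycle H t) (i j k : ZMod t) (e : Finset V) : Prop :=
  (CwBtw i k j ∧ ((e = C.edge (k + 1) ∧ e = {C.vtx i, C.vtx (k + 1), C.vtx (k + 2)}) ∨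
                (e = C.edge (k - 1) ∧ e = {C.vtx j, C.vtx k, C.vtx (k - 1)}))) ∨
  (CwBtw j k i ∧ ((e = C.edge (k - 1) ∧ e = {C.vtx i, C.vtx k, C.vtx (k - 1)}) ∨
                (e = C.edge (k + 1) ∧ e = {C.vtx j, C.vtx (k + 1), C.vtx (k + 2)})))

/-- `R(v_i, v_j)`: the set of bridges produced by the pair `{v_i, v_j}`,
i.e. all `(i,j;k)`-bridges over `k ∉ {i, j}`. -/
def RBridges {V : Type*} [DecidableEq V] {H : Finset (Finset V)} {t : ℕ}
    (C : BergeCycle H t) (i j : ZMod t) : Set (Finset V) :=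
  {e | ∃ k : ZMod t, k ≠ i ∧ k ≠ j ∧ IsBridge C i j k e}

/-- The construction `H'_r`: an `(n-1)`-clique `K_{n-1}^{(r)}`
together with one extra vertex `w` in exactly one edge `{1, …, r-1, n}`.
It is not Berge-Hamiltonian, and every non-adjacent pair has shadow degree
sum exactly `n + r - 3`. -/
theorem stmt1 (n r : ℕ) (hr : 3 ≤ r) (hn : r + 2 ≤ n)
    (w : Fin n) (hw : (w : ℕ) = n - 1)
    (H : Finset (Finset (Fin n)))
    (hH : H = ((Finset.univ.filter fun x : Fin n => (x : ℕ) < n - 1).powersetCard r) ∪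
      {(Finset.univ.filter fun x : Fin n => (x : ℕ) < r - 1) ∪ {w}}) :
    ¬ HamiltonianBergeCycle H ∧
      ∀ u v : Fin n, u ≠ v → ¬ HAdj H u v →
        shadowDeg H u + shadowDeg H v = n + r - 3 := by
    classical
  set S : Finset (Fin n) := Finset.univ.filter fun x : Fin n => (x : ℕ) < n - 1 with hS
  set A : Finset (Fin n) := Finset.univ.filter fun x : Fin n => (x : ℕ) < r - 1 with hA
  have hmemS : ∀ x : Fin n, x ∈ S ↔ x ≠ w := by
    intro x
    simp only [hS, Finset.mem_filter, Finset.mem_univ, true_and]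
    constructor
    · intro h hxw; subst hxw; omega
    · intro h
      rcases Nat.lt_or_ge (x : ℕ) (n - 1) with h' | h'
      · exact h'
      · exfalso; apply h; apply Fin.ext; have := x.isLt; omega
  have hmemA : ∀ x : Fin n, x ∈ A ↔ (x : ℕ) < r - 1 := by
    intro x; simp [hA]
  have hwS : w ∉ S := by simp [hmemS]
  have hwA : w ∉ A := by rw [hmemA]; omega
  have hScard : S.card = n - 1 := by
    have : S = Finset.univ.erase w := by
      ext x; simp [hmemS x, Finset.mem_erase]
    rw [this, Finset.card_erase_of_mem (Finset.mem_univ _)]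
    simp
  have hAcard : A.card = r - 1 := by
    rw [show r - 1 = (Finset.range (r - 1)).card from (Finset.card_range _).symm]
    refine Finset.card_bij (fun a _ => (a : ℕ)) ?_ ?_ ?_
    · intro a ha; rw [Finset.mem_range]; exact (hmemA a).1 ha
    · intro a _ b _ h; exact Fin.ext h
    · intro b hb
      rw [Finset.mem_range] at hb
      exact ⟨⟨b, by omega⟩, (hmemA _).2 hb, rfl⟩
  have memH : ∀ e, e ∈ H ↔ (e ⊆ S ∧ e.card = r) ∨ e = A ∪ {w} := by
    intro e
    subst hH
    simp [Finset.mem_union, Finset.mem_powersetCard]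
    exact or_comm
  have hest : A ∪ {w} ∈ H := (memH _).2 (Or.inr rfl)
  have only_edge_w : ∀ e ∈ H, w ∈ e → e = A ∪ {w} := by
    intro e he hwe
    rcases (memH e).1 he with ⟨hsub, _⟩ | h
    · exact absurd (hsub hwe) hwS
    · exact h
  have clique : ∀ u v : Fin n, u ∈ S → v ∈ S → u ≠ v → HAdj H u v := by
    intro u v hu hv huv
    have hsub : ({u, v} : Finset (Fin n)) ⊆ S := by
      intro x hx
      rcases Finset.mem_insert.1 hx with h | h
      · exact h ▸ hu
      · exact (Finset.mem_singleton.1 h) ▸ hv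
    have hcard2 : ({u, v} : Finset (Fin n)).card ≤ r := by
      have := Finset.card_insert_le u ({v} : Finset (Fin n))
      simp only [Finset.card_singleton] at this
      omega
    obtain ⟨e, he1, he2, he3⟩ :=
      Finset.exists_subsuperset_card_eq hsub hcard2 (by omega : r ≤ S.card)
    refine ⟨huv, e, (memH e).2 (Or.inl ⟨he2, he3⟩), ?_, ?_⟩
    · exact he1 (Finset.mem_insert_self _ _)
    · exact he1 (Finset.mem_insert_of_mem (Finset.mem_singleton_self _))
  have adj_w : ∀ v : Fin n, HAdj H w v ↔ v ∈ A := by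
    intro v
    constructor
    · rintro ⟨hne, e, he, hwe, hve⟩
      have := only_edge_w e he hwe
      subst this
      rcases Finset.mem_union.1 hve with h | h
      · exact h
      · exact absurd (Finset.mem_singleton.1 h) hne.symm
    · intro hv
      refine ⟨fun h => hwA (h ▸ hv), A ∪ {w}, hest, ?_, Finset.mem_union_left _ hv⟩
      exact Finset.mem_union_right _ (Finset.mem_singleton_self _)
  have adj_symm : ∀ u v : Fin n, HAdj H u v → HAdj H v u := by
    rintro u v ⟨hne, e, he, h1, h2⟩
    exact ⟨hne.symm, e, he, h2, h1⟩
  have degw : shadowDeg H w = r - 1 := by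
    have : {v | HAdj H w v} = (A : Set (Fin n)) := by
      ext v; simp [adj_w v]
    rw [shadowDeg, this, Set.ncard_coe_finset, hAcard]
  have degx : ∀ x : Fin n, x ∈ S → x ∉ A → shadowDeg H x = n - 2 := by
    intro x hx hxA
    have hset : {v | HAdj H x v} = ((S.erase x : Finset (Fin n)) : Set (Fin n)) := by
      ext v
      simp only [Set.mem_setOf_eq, Finset.coe_erase, Set.mem_diff,
        Finset.mem_coe, Set.mem_singleton_iff]
      constructor
      · rintro ⟨hne, e, he, hxe, hve⟩
        rcases (memH e).1 he with ⟨hsub, _⟩ | h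
        · exact ⟨hsub hve, hne.symm⟩
        · subst h
          rcases Finset.mem_union.1 hxe with h | h
          · exact absurd h hxA
          · exact absurd ((hmemS x).1 hx) (by simp [Finset.mem_singleton.1 h])
      · rintro ⟨hv, hne⟩
        exact clique x v hx hv (fun h => hne h.symm)
    rw [shadowDeg, hset, Set.ncard_coe_finset,
      Finset.card_erase_of_mem hx, hScard]
    omega
  constructor
  · rintro ⟨t, C, hC⟩
    -- t = 0 impossible
    match t, C, hC with
    | 0, C, hC =>
      exact absurd (Finite.of_injective C.vtx C.vtx_inj) (@Infinite.not_finite ℤ _)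
    | 1, C, hC =>
      have h0 : (⟨0, by omega⟩ : Fin n) ∈ Set.range C.vtx := hC ▸ Set.mem_univ _
      have h1 : (⟨1, by omega⟩ : Fin n) ∈ Set.range C.vtx := hC ▸ Set.mem_univ _
      obtain ⟨a, ha⟩ := h0
      obtain ⟨b, hb⟩ := h1
      have : a = b := Subsingleton.elim a b
      rw [this, hb] at ha
      exact absurd (congrArg Fin.val ha) (by simp)
    | (k + 2), C, hC =>
      haveI : Fact (1 < k + 2) := ⟨by omega⟩
      obtain ⟨i, hi⟩ : w ∈ Set.range C.vtx := hC ▸ Set.mem_univ _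
      have h1 : w ∈ C.edge i := hi ▸ C.mem_fst i
      have h2 : w ∈ C.edge (i - 1) := by
        have := C.mem_snd (i - 1)
        rw [sub_add_cancel, hi] at this
        exact this
      have e1 := only_edge_w _ (C.edge_mem i) h1
      have e2 := only_edge_w _ (C.edge_mem (i - 1)) h2
      have : i = i - 1 := C.edge_inj (e1.trans e2.symm)
      have h10 : (1 : ZMod (k + 2)) = 0 := by
        have := sub_eq_self.1 this.symm
        exact this
      exact one_ne_zero h10
  · intro u v huv hnadj
    have hclass : (u = w ∧ v ∈ S ∧ v ∉ A) ∨ (v = w ∧ u ∈ S ∧ u ∉ A) := by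
      by_cases hu : u = w
      · subst hu
        have hv : v ∈ S := (hmemS v).2 (fun h => huv h.symm)
        refine Or.inl ⟨rfl, hv, fun hvA => hnadj ?_⟩
        exact (adj_w v).2 hvA
      · have hu' : u ∈ S := (hmemS u).2 hu
        by_cases hv : v = w
        · subst hv
          refine Or.inr ⟨rfl, hu', fun huA => hnadj ?_⟩
          exact adj_symm _ _ ((adj_w u).2 huA)
        · exact absurd (clique u v hu' ((hmemS v).2 hv) huv) hnadj
    rcases hclass with ⟨h1, h2, h3⟩ | ⟨h1, h2, h3⟩
    · rw [h1, degw, degx v h2 h3]; omega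
    · rw [h1, degx u h2 h3, degw]; omega
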